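/- arXiv:2206.10698 — 3 statements merged into one kernel-verified Lean document; each statement's English description precedes it below -/
import Mathlib

section
/- For a real matrix Z of size d×n with unit-norm columns, the squared Frobenius norm of C = Z Zᵀ satisfies ‖C‖_F² ≥ n²/d, with equality if and only if C = (n/d)·I (the scaled identity matrix), assuming d ≤ n. -/
open Matrix

theorem frobenius_cov_lower_bound (d n : ℕ) (hdn : d ≤ n)
    (Z : Matrix (Fin d) (Fin n) ℝ) (hcol : ∀ j, ∑ i, (Z i j)^2 = 1) :
    (n:ℝ)^2 / d ≤ ∑ i, ∑ j, ((Z * Zᵀ) i j)^2 ∧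
    (∑ i, ∑ j, ((Z * Zᵀ) i j)^2 = (n:ℝ)^2 / d ↔
      Z * Zᵀ = ((n:ℝ)/d) • (1 : Matrix (Fin d) (Fin d) ℝ)) := by
  set C := Z * Zᵀ with hC
  rcases Nat.eq_zero_or_pos d with hd | hd
  · subst hd
    have hn : n = 0 := by
      by_contra h
      have := hcol ⟨0, Nat.pos_of_ne_zero h⟩
      simp at this
    subst hn
    refine ⟨by simp, ?_, ?_⟩
    · intro _
      ext i j
      exact i.elim0
    · intro _
      simp
  · have hdR : (0:ℝ) < d := by exact_mod_cast hd
    have htr : ∑ i, C i i = (n:ℝ) := by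
      have : ∑ i, C i i = ∑ i, ∑ j, (Z i j)^2 := by
        simp [hC, Matrix.mul_apply, Matrix.transpose_apply, sq]
      rw [this, Finset.sum_comm]
      simp [hcol]
    set c : ℝ := (n:ℝ) / d with hc
    have h2 : ∑ i, (C i i - c)^2 = ∑ i, (C i i)^2 - (n:ℝ)^2/d := by
      have e : ∀ i ∈ Finset.univ, (C i i - c)^2 = (C i i)^2 - 2*c*(C i i) + c^2 :=
        fun i _ => by ring
      rw [Finset.sum_congr rfl e, Finset.sum_add_distrib, Finset.sum_sub_distrib,
        ← Finset.mul_sum, htr, Finset.sum_const, Finset.card_univ, Fintype.card_fin,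
        nsmul_eq_mul]
      rw [hc]
      field_simp
      ring
    have h1 : ∀ i, ∑ j, (C i j)^2 = (C i i)^2 + ∑ j ∈ Finset.univ.erase i, (C i j)^2 :=
      fun i => (Finset.add_sum_erase _ _ (Finset.mem_univ i)).symm
    have key : ∑ i, ∑ j, (C i j)^2 =
        (n:ℝ)^2/d + ∑ i, (C i i - c)^2 + ∑ i, ∑ j ∈ Finset.univ.erase i, (C i j)^2 := by
      rw [Finset.sum_congr rfl (fun i _ => h1 i), Finset.sum_add_distrib, h2]
      ring
    have hA : 0 ≤ ∑ i, (C i i - c)^2 := Finset.sum_nonneg fun i _ => sq_nonneg _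
    have hB : 0 ≤ ∑ i, ∑ j ∈ Finset.univ.erase i, (C i j)^2 :=
      Finset.sum_nonneg fun i _ => Finset.sum_nonneg fun j _ => sq_nonneg _
    refine ⟨by linarith, ?_, ?_⟩
    · intro h
      have hAB : ∑ i, (C i i - c)^2 + ∑ i, ∑ j ∈ Finset.univ.erase i, (C i j)^2 = 0 := by
        linarith
      have hA0 : ∑ i, (C i i - c)^2 = 0 := by linarith
      have hB0 : ∑ i, ∑ j ∈ Finset.univ.erase i, (C i j)^2 = 0 := by linarith
      have hdiag : ∀ i, C i i = c := by
        intro i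
        have := (Finset.sum_eq_zero_iff_of_nonneg (fun i _ => sq_nonneg (C i i - c))).mp
          hA0 i (Finset.mem_univ i)
        have := sq_eq_zero_iff.mp this
        linarith
      have hoff : ∀ i j, i ≠ j → C i j = 0 := by
        intro i j hij
        have hBi : ∑ j ∈ Finset.univ.erase i, (C i j)^2 = 0 :=
          (Finset.sum_eq_zero_iff_of_nonneg
            (fun i _ => Finset.sum_nonneg fun j _ => sq_nonneg _)).mp hB0 i
            (Finset.mem_univ i)
        have := (Finset.sum_eq_zero_iff_of_nonneg (fun j _ => sq_nonneg (C i j))).mp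
          hBi j (Finset.mem_erase.mpr ⟨fun e => hij e.symm, Finset.mem_univ j⟩)
        exact sq_eq_zero_iff.mp this
      ext i j
      by_cases hij : i = j
      · subst hij
        simp [Matrix.smul_apply, Matrix.one_apply, hdiag i, hc]
      · simp [Matrix.smul_apply, Matrix.one_apply, hij, hoff i j hij]
    · intro h
      rw [h]
      have : ∀ i : Fin d, ∑ j, ((c • (1 : Matrix (Fin d) (Fin d) ℝ)) i j)^2 = c^2 := by
        intro i
        simp [Matrix.smul_apply, Matrix.one_apply, apply_ite (· ^ 2),
          Finset.sum_ite_eq' Finset.univ i (fun _ => c^2)]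
      rw [Finset.sum_congr rfl (fun i _ => this i), Finset.sum_const, Finset.card_univ,
        Fintype.card_fin, nsmul_eq_mul, hc]
      field_simp
end

section
/- For a real matrix Z of size d×n with d ≤ n and unit-norm columns, ‖Z Zᵀ‖_F² = n²/d holds if and only if all eigenvalues of Z Zᵀ equal n/d. -/
open Matrix

theorem frobenius_eq_iff_eigenvalues_eq (d n : ℕ) (hdn : d ≤ n)
    (Z : Matrix (Fin d) (Fin n) ℝ) (hcol : ∀ j, ∑ i, (Z i j)^2 = 1)
    (hH : (Z * Zᵀ).IsHermitian) :
    ∑ i, ∑ j, ((Z * Zᵀ) i j)^2 = (n:ℝ)^2 / d ↔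
      ∀ i, hH.eigenvalues i = (n:ℝ) / d := by
  classical
  rcases Nat.eq_zero_or_pos d with hd | hd
  · subst hd
    exact iff_of_true (by simp) (fun i => i.elim0)
  set A := Z * Zᵀ with hA
  set lam := hH.eigenvalues with hlam
  set U := (hH.eigenvectorUnitary : Matrix (Fin d) (Fin d) ℝ) with hUdef
  set D := Matrix.diagonal ((RCLike.ofReal : ℝ → ℝ) ∘ lam) with hDdef
  have hUU : star U * U = 1 := Unitary.coe_star_mul_self _
  have hUU' : U * star U = 1 := Unitary.coe_mul_star_self _
  have hspec : A = U * D * star U := hH.spectral_theorem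
  -- trace of A is n
  have htrA : A.trace = (n : ℝ) := by
    have : A.trace = ∑ i, ∑ j, (Z i j)^2 := by
      simp [Matrix.trace, Matrix.diag, Matrix.mul_apply, sq, A]
    rw [this, Finset.sum_comm]
    simp [hcol]
  have htrA' : ∑ i, lam i = (n : ℝ) := by
    have : A.trace = ∑ i, lam i := by
      rw [hspec, Matrix.trace_mul_comm, ← Matrix.mul_assoc, hUU, Matrix.one_mul]
      simp [hDdef, Matrix.trace_diagonal]
    rw [← this, htrA]
  -- symmetry of A
  have hsymm : ∀ i j, A j i = A i j := by
    intro i j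
    have := hH.eq
    calc A j i = Aᴴ i j := by simp [Matrix.conjTranspose_apply]
    _ = A i j := by rw [this]
  -- Frobenius norm squared equals trace of A*A equals sum of eigenvalue squares
  have hfro : ∑ i, ∑ j, (A i j)^2 = ∑ i, lam i ^ 2 := by
    have h1 : (A * A).trace = ∑ i, ∑ j, (A i j)^2 := by
      simp only [Matrix.trace, Matrix.diag, Matrix.mul_apply]
      refine Finset.sum_congr rfl fun i _ => Finset.sum_congr rfl fun j _ => ?_
      rw [hsymm i j, sq]
    have h2 : (A * A).trace = ∑ i, lam i ^ 2 := by
      have : A * A = U * (D * D) * star U := by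
        rw [hspec]
        calc U * D * star U * (U * D * star U)
            = U * (D * ((star U * U) * (D * star U))) := by
              simp only [Matrix.mul_assoc]
          _ = U * (D * D) * star U := by
              simp only [hUU, Matrix.one_mul, Matrix.mul_assoc]
      rw [this, Matrix.trace_mul_comm, ← Matrix.mul_assoc, hUU, Matrix.one_mul]
      simp [hDdef, Matrix.diagonal_mul_diagonal, Matrix.trace_diagonal, sq]
    rw [← h1, h2]
  rw [hfro]
  have hdR : (0:ℝ) < d := by exact_mod_cast hd
  have key : ∑ i, (lam i - (n:ℝ)/d)^2 = ∑ i, lam i ^ 2 - (n:ℝ)^2 / d := by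
    have expand : ∑ i, (lam i - (n:ℝ)/d)^2
        = ∑ i, lam i ^ 2 - 2*((n:ℝ)/d)*(∑ i, lam i) + d * ((n:ℝ)/d)^2 := by
      simp only [sub_sq]
      rw [Finset.sum_add_distrib, Finset.sum_sub_distrib, ← Finset.sum_mul,
        ← Finset.mul_sum, Finset.sum_const, Finset.card_univ, Fintype.card_fin, nsmul_eq_mul]
      ring
    rw [expand, htrA']
    field_simp
    ring
  constructor
  · intro h i
    have hz : ∑ i, (lam i - (n:ℝ)/d)^2 = 0 := by rw [key, h, sub_self]
    have := (Finset.sum_eq_zero_iff_of_nonneg (fun i _ => sq_nonneg _)).mp hz i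
      (Finset.mem_univ i)
    have := (pow_eq_zero_iff two_ne_zero).mp this
    linarith [sub_eq_zero.mp this]
  · intro h
    simp only [h]
    rw [Finset.sum_const, Finset.card_univ, Fintype.card_fin, nsmul_eq_mul]
    field_simp
end

section
/- For unit vectors z'₁,…,z'_n, z''₁,…,z''_n in ℝ^d and ρ > 0, the TiCo loss with C = (1/n)∑ⱼ z'ⱼ z'ⱼᵀ, namely ℓ = −(1/n)∑ᵢ z'ᵢᵀ z''ᵢ + (ρ/n)∑ᵢ z'ᵢᵀ C z'ᵢ, is bounded below by −1 + ρ/d. -/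
open Matrix

lemma tico_aux (d : ℕ) (c : ℝ) (a b : Fin d → ℝ) :
    ∑ x, ∑ y, a x * (c * (b x * b y) * a y) = c * (∑ k, a k * b k)^2 := by
  rw [sq, Finset.sum_mul_sum, Finset.mul_sum]
  refine Finset.sum_congr rfl fun x _ => ?_
  rw [Finset.mul_sum]
  exact Finset.sum_congr rfl fun y _ => by ring

theorem tico_loss_lower_bound (d n : ℕ) (hd : 0 < d) (hn : 0 < n)
    (ρ : ℝ) (hρ : 0 < ρ)
    (z' z'' : Fin n → Fin d → ℝ)
    (hz' : ∀ i, ∑ k, (z' i k)^2 = 1) (hz'' : ∀ i, ∑ k, (z'' i k)^2 = 1) :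
    -1 + ρ/d ≤ -((1/(n:ℝ)) * ∑ i, z' i ⬝ᵥ z'' i)
      + (ρ/(n:ℝ)) * ∑ i, z' i ⬝ᵥ
          (((1/(n:ℝ)) • ∑ j, vecMulVec (z' j) (z' j)) *ᵥ z' i) := by
  have hn' : (0:ℝ) < n := by exact_mod_cast hn
  have hd' : (0:ℝ) < d := by exact_mod_cast hd
  -- First term: each dot product ≤ 1
  have hdot : ∀ i, z' i ⬝ᵥ z'' i ≤ 1 := by
    intro i
    have h := Finset.sum_mul_sq_le_sq_mul_sq Finset.univ (z' i) (z'' i)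
    rw [hz' i, hz'' i, one_mul] at h
    rw [dotProduct]
    nlinarith [h]
  have hA : ∑ i, z' i ⬝ᵥ z'' i ≤ n := by
    calc ∑ i, z' i ⬝ᵥ z'' i ≤ ∑ _i : Fin n, (1:ℝ) :=
          Finset.sum_le_sum fun i _ => hdot i
      _ = n := by simp
  -- Second term: rewrite quadratic form
  have hT : ∑ i, z' i ⬝ᵥ (((1/(n:ℝ)) • ∑ j, vecMulVec (z' j) (z' j)) *ᵥ z' i)
      = (1/(n:ℝ)) * ∑ i, ∑ j, (z' i ⬝ᵥ z' j)^2 := by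
    rw [Finset.mul_sum]
    refine Finset.sum_congr rfl fun i _ => ?_
    simp only [Matrix.mulVec, dotProduct, vecMulVec, Matrix.smul_apply,
      Matrix.sum_apply, Matrix.of_apply, smul_eq_mul, Finset.mul_sum, Finset.sum_mul]
    calc ∑ x, ∑ y, ∑ j, z' i x * (1/(n:ℝ) * (z' j x * z' j y) * z' i y)
        = ∑ x, ∑ j, ∑ y, z' i x * (1/(n:ℝ) * (z' j x * z' j y) * z' i y) :=
          Finset.sum_congr rfl fun x _ => Finset.sum_comm
      _ = ∑ j, ∑ x, ∑ y, z' i x * (1/(n:ℝ) * (z' j x * z' j y) * z' i y) :=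
          Finset.sum_comm
      _ = ∑ j, 1/(n:ℝ) * (∑ k, z' i k * z' j k)^2 :=
          Finset.sum_congr rfl fun j _ => tico_aux d (1/(n:ℝ)) (z' i) (z' j)
  -- Lower bound on the Gram sum
  have hD : (n:ℝ)^2 / d ≤ ∑ i, ∑ j, (z' i ⬝ᵥ z' j)^2 := by
    set S : Fin d → Fin d → ℝ := fun k l => ∑ i, z' i k * z' i l with hS
    have e1 : ∀ i j : Fin n, (z' i ⬝ᵥ z' j)^2
        = ∑ k, ∑ l, (z' i k * z' i l) * (z' j k * z' j l) := by
      intro i j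
      rw [dotProduct, sq, Finset.sum_mul_sum]
      exact Finset.sum_congr rfl fun k _ => Finset.sum_congr rfl fun l _ => by ring
    have e2 : ∀ k l : Fin d, (S k l)^2
        = ∑ i, ∑ j, (z' i k * z' i l) * (z' j k * z' j l) := by
      intro k l
      rw [hS, sq, Finset.sum_mul_sum]
    have hswap : ∑ i, ∑ j, (z' i ⬝ᵥ z' j)^2 = ∑ k, ∑ l, (S k l)^2 := by
      have swap4 : ∀ (g : Fin n → Fin n → Fin d → Fin d → ℝ),
          ∑ i, ∑ j, ∑ k, ∑ l, g i j k l = ∑ k, ∑ l, ∑ i, ∑ j, g i j k l := by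
        intro g
        calc ∑ i, ∑ j, ∑ k, ∑ l, g i j k l
            = ∑ i, ∑ k, ∑ j, ∑ l, g i j k l :=
              Finset.sum_congr rfl fun i _ => Finset.sum_comm
          _ = ∑ i, ∑ k, ∑ l, ∑ j, g i j k l :=
              Finset.sum_congr rfl fun i _ =>
                Finset.sum_congr rfl fun k _ => Finset.sum_comm
          _ = ∑ k, ∑ i, ∑ l, ∑ j, g i j k l := Finset.sum_comm
          _ = ∑ k, ∑ l, ∑ i, ∑ j, g i j k l :=
              Finset.sum_congr rfl fun k _ => Finset.sum_comm
      simp only [e1, e2]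
      exact swap4 fun i j k l => z' i k * z' i l * (z' j k * z' j l)
    have htr : ∑ k, S k k = n := by
      simp only [hS]
      rw [Finset.sum_comm]
      simp only [← sq]
      rw [Finset.sum_congr rfl fun i _ => hz' i]
      simp
    have h1 : ((n:ℝ))^2 ≤ d * ∑ k, (S k k)^2 := by
      have := sq_sum_le_card_mul_sum_sq (s := (Finset.univ : Finset (Fin d)))
        (f := fun k => S k k)
      rw [htr] at this
      simpa using this
    have h2 : ∑ k, (S k k)^2 ≤ ∑ k, ∑ l, (S k l)^2 := by
      refine Finset.sum_le_sum fun k _ => ?_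
      exact Finset.single_le_sum (f := fun l => (S k l)^2)
        (fun l _ => sq_nonneg _) (Finset.mem_univ k)
    rw [hswap, div_le_iff₀ hd']
    nlinarith
  rw [hT]
  have key : ρ/d ≤ (ρ/(n:ℝ)) * ((1/(n:ℝ)) * ∑ i, ∑ j, (z' i ⬝ᵥ z' j)^2) := by
    have h3 : (ρ/(n:ℝ)) * ((1/(n:ℝ)) * ((n:ℝ)^2/d)) ≤
        (ρ/(n:ℝ)) * ((1/(n:ℝ)) * ∑ i, ∑ j, (z' i ⬝ᵥ z' j)^2) := by
      gcongr
    calc ρ/d = (ρ/(n:ℝ)) * ((1/(n:ℝ)) * ((n:ℝ)^2/d)) := by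
          field_simp
      _ ≤ _ := h3
  have first : -1 ≤ -((1/(n:ℝ)) * ∑ i, z' i ⬝ᵥ z'' i) := by
    rw [neg_le_neg_iff, div_mul_eq_mul_div, one_mul, div_le_one hn']
    exact hA
  linarith
end
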